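/- arXiv:0707.1551 — 2 statements merged into one kernel-verified Lean document; each statement's English description precedes it below -/
import Mathlib

section
/- For every finite vertex set V, every digraph G=(V,A), every sign vector σ ∈ {−1,1}^A, and every a ∈ [0,1), the set O_{G,σ,a} := {(T,x) ∈ [0,1]^A × [0,1]^V : inf_{t≥0} d_max(F_{G,σ,T,a}^t(x), Δ_T) > 0} is an open subset of [0,1]^A × [0,1]^V. -/
open MeasureTheory Filter Topology
open scoped ENNReal

/-- The Heaviside function: `H(s) = 1` if `s ≥ 0`, and `0` otherwise. -/
noncomputable def heaviside (s : ℝ) : ℝ := if 0 ≤ s then 1 else 0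

/-- Signs `{-1,1}` encoded by booleans: `true ↦ +1`, `false ↦ -1`. -/
def signVal (b : Bool) : ℝ := if b then 1 else -1

variable {V : Type*} [Fintype V] [DecidableEq V]

/-- In-degree of a vertex `v` in the arrow set `A`: `Id(v) = #{u : (u,v) ∈ A}`. -/
def inDeg {V : Type*} [DecidableEq V] (A : Finset (V × V)) (v : V) : ℕ :=
  (A.filter fun e => e.2 = v).card

/-- The regulatory map `F_{G,σ,T,a}(x)_v = a x_v + (1-a) (1/Id(v)) Σ_{(u,v)∈A} H(σ_{(u,v)}(x_u - T_{(u,v)}))`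
(the interaction term being `0` when `Id(v) = 0`, by the convention `(0 : ℝ)⁻¹ = 0`). -/
noncomputable def regMap {V : Type*} [Fintype V] [DecidableEq V] (A : Finset (V × V))
    (σ : {e // e ∈ A} → Bool) (T : {e // e ∈ A} → ℝ) (a : ℝ) (x : V → ℝ) : V → ℝ := fun v =>
  a * x v + (1 - a) * ((inDeg A v : ℝ)⁻¹ *
    ∑ e ∈ A.attach.filter (fun e => e.val.2 = v),
      heaviside (signVal (σ e) * (x e.val.1 - T e)))

/-- The cube `[0,1]^V`. -/
def cubeV (V : Type*) [Fintype V] : Set (V → ℝ) := Set.pi Set.univ fun _ => Set.Icc (0:ℝ) 1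

/-- The cube `[0,1]^A`. -/
def cubeA {V : Type*} [Fintype V] [DecidableEq V] (A : Finset (V × V)) :
    Set ({e // e ∈ A} → ℝ) := Set.pi Set.univ fun _ => Set.Icc (0:ℝ) 1

/-- The discontinuity set `Δ_T = {x ∈ [0,1]^V : x_u = T_{(u,v)} for some (u,v) ∈ A}`. -/
def discSet {V : Type*} [Fintype V] [DecidableEq V] (A : Finset (V × V))
    (T : {e // e ∈ A} → ℝ) : Set (V → ℝ) :=
  {x | x ∈ cubeV V ∧ ∃ e : {e // e ∈ A}, x e.val.1 = T e}

/-- `inf_{t ≥ 0} d_max(F^t(x), Δ_T)` as an extended nonnegative real (the metric on `V → ℝ`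
is the sup metric `d_max`, and the distance to the empty set is `∞`). -/
noncomputable def orbitGap {V : Type*} [Fintype V] [DecidableEq V] (A : Finset (V × V))
    (σ : {e // e ∈ A} → Bool) (T : {e // e ∈ A} → ℝ) (a : ℝ) (x : V → ℝ) : ℝ≥0∞ :=
  ⨅ t : ℕ, EMetric.infEdist ((regMap A σ T a)^[t] x) (discSet A T)

/-- `asympPeriod A σ T a x τ` says that the asymptotic period `P(F_{G,σ,T,a}, x)` equals `τ`:
there is a periodic point `y ∈ [0,1]^V` of minimal period `τ ≥ 1` whose orbit attracts that
of `x` (distances are the sup metric `d_max`). -/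
def asympPeriod {V : Type*} [Fintype V] [DecidableEq V] (A : Finset (V × V))
    (σ : {e // e ∈ A} → Bool) (T : {e // e ∈ A} → ℝ) (a : ℝ) (x : V → ℝ) (τ : ℕ) : Prop :=
  1 ≤ τ ∧ ∃ y ∈ cubeV V, (regMap A σ T a)^[τ] y = y ∧
    (∀ t, 0 < t → t < τ → (regMap A σ T a)^[t] y ≠ y) ∧
    Filter.Tendsto (fun t => dist ((regMap A σ T a)^[t] x) ((regMap A σ T a)^[t] y))
      Filter.atTop (nhds 0)

lemma heaviside_mem_Icc (s : ℝ) : heaviside s ∈ Set.Icc (0:ℝ) 1 := by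
  unfold heaviside; split <;> norm_num

lemma card_filter_attach_eq (A : Finset (V × V)) (v : V) :
    ((A.attach.filter (fun e => e.val.2 = v)).card : ℝ) = (inDeg A v : ℝ) := by
  rw [Finset.filter_attach (fun y : V × V => y.2 = v) A]; simp [inDeg]

lemma regMap_mem_cubeV (A : Finset (V × V)) (σ : {e // e ∈ A} → Bool) (T : {e // e ∈ A} → ℝ)
    {a : ℝ} (ha0 : 0 ≤ a) (ha1 : a < 1) {x : V → ℝ} (hx : x ∈ cubeV V) :
    regMap A σ T a x ∈ cubeV V := by
  intro v _
  have hxv := hx v (Set.mem_univ v)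
  set s := ∑ e ∈ A.attach.filter (fun e => e.val.2 = v),
      heaviside (signVal (σ e) * (x e.val.1 - T e)) with hs_def
  have hs0 : 0 ≤ s := Finset.sum_nonneg fun e _ => (heaviside_mem_Icc _).1
  have hs1 : s ≤ (inDeg A v : ℝ) := by
    calc s ≤ ∑ _e ∈ A.attach.filter (fun e => e.val.2 = v), (1:ℝ) :=
          Finset.sum_le_sum fun e _ => (heaviside_mem_Icc _).2
    _ = ((A.attach.filter (fun e => e.val.2 = v)).card : ℝ) := by simp
    _ = (inDeg A v : ℝ) := card_filter_attach_eq A v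
  have hc0 : 0 ≤ (inDeg A v : ℝ)⁻¹ * s := mul_nonneg (by positivity) hs0
  have hc1 : (inDeg A v : ℝ)⁻¹ * s ≤ 1 := by
    rcases eq_or_ne (inDeg A v) 0 with h | h
    · simp [h]
    · have hpos : (0:ℝ) < (inDeg A v : ℝ) := by
        exact_mod_cast Nat.pos_of_ne_zero h
      rw [inv_mul_le_iff₀ hpos]; linarith
  constructor
  · have := hxv.1; unfold regMap; nlinarith
  · have := hxv.2; unfold regMap; nlinarith

lemma heaviside_signVal_eq {r r' : ℝ} (b : Bool) (h : |r' - r| < |r|) :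
    heaviside (signVal b * r) = heaviside (signVal b * r') := by
  have h1 := abs_lt.1 h
  rcases lt_trichotomy r 0 with hr | hr | hr
  · have hr' : r' < 0 := by rw [abs_of_neg hr] at h1; linarith
    unfold heaviside signVal
    split_ifs <;> first | rfl | nlinarith
  · rw [hr, abs_zero] at h; linarith [abs_nonneg (r' - (0:ℝ))]
  · have hr' : 0 < r' := by rw [abs_of_pos hr] at h1; linarith
    unfold heaviside signVal
    split_ifs <;> first | rfl | nlinarith

lemma regMap_sub (A : Finset (V × V)) (σ : {e // e ∈ A} → Bool)
    {T T' : {e // e ∈ A} → ℝ} (a : ℝ) {x x' : V → ℝ}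
    (hH : ∀ e : {e // e ∈ A},
      heaviside (signVal (σ e) * (x e.val.1 - T e)) =
      heaviside (signVal (σ e) * (x' e.val.1 - T' e))) (v : V) :
    regMap A σ T' a x' v - regMap A σ T a x v = a * (x' v - x v) := by
  unfold regMap
  rw [Finset.sum_congr rfl (fun e _ => (hH e).symm)]
  ring
lemma iterate_mem_cubeV (A : Finset (V × V)) (σ : {e // e ∈ A} → Bool) (T : {e // e ∈ A} → ℝ)
    {a : ℝ} (ha0 : 0 ≤ a) (ha1 : a < 1) {x : V → ℝ} (hx : x ∈ cubeV V) (t : ℕ) :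
    (regMap A σ T a)^[t] x ∈ cubeV V := by
  induction t with
  | zero => simpa
  | succ t ih => rw [Function.iterate_succ_apply']; exact regMap_mem_cubeV A σ T ha0 ha1 ih

lemma orbit_close (A : Finset (V × V)) (σ : {e // e ∈ A} → Bool)
    {T T' : {e // e ∈ A} → ℝ} {a : ℝ} (ha0 : 0 ≤ a) (ha1 : a < 1)
    {x x' : V → ℝ} {ε δ : ℝ} (hδ : 0 ≤ δ) (h2δ : 2 * δ < ε)
    (hK1 : ∀ t (e : {e // e ∈ A}), ε ≤ |((regMap A σ T a)^[t] x) e.val.1 - T e|)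
    (hdT : ∀ e, |T' e - T e| ≤ δ) (hdx : ∀ v, |x' v - x v| ≤ δ) :
    ∀ t v, |((regMap A σ T' a)^[t] x') v - ((regMap A σ T a)^[t] x) v| ≤ δ := by
  intro t
  induction t with
  | zero => simpa using hdx
  | succ t ih =>
    intro v
    rw [Function.iterate_succ_apply', Function.iterate_succ_apply']
    set z := (regMap A σ T a)^[t] x with hz
    set z' := (regMap A σ T' a)^[t] x' with hz'
    have hH : ∀ e : {e // e ∈ A},
        heaviside (signVal (σ e) * (z e.val.1 - T e)) =
        heaviside (signVal (σ e) * (z' e.val.1 - T' e)) := by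
      intro e
      apply heaviside_signVal_eq
      have h1 := hK1 t e
      have h2 := ih e.val.1
      have h3 := hdT e
      have key : (z' e.val.1 - T' e) - (z e.val.1 - T e)
          = (z' e.val.1 - z e.val.1) - (T' e - T e) := by ring
      calc |(z' e.val.1 - T' e) - (z e.val.1 - T e)|
          = |(z' e.val.1 - z e.val.1) - (T' e - T e)| := by rw [key]
        _ ≤ |z' e.val.1 - z e.val.1| + |T' e - T e| := abs_sub _ _
        _ < |z e.val.1 - T e| := by linarith
    have hsub := regMap_sub A σ a hH v
    rw [hsub, abs_mul, abs_of_nonneg ha0]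
    calc a * |z' v - z v| ≤ 1 * δ :=
        mul_le_mul (le_of_lt ha1) (ih v) (abs_nonneg _) zero_le_one
      _ = δ := one_mul δ

/-- For every finite vertex set `V`, digraph `G=(V,A)`, sign vector
`σ ∈ {-1,1}^A` and `a ∈ [0,1)`, the set
`O_{G,σ,a} = {(T,x) ∈ [0,1]^A × [0,1]^V : inf_{t≥0} d_max(F_{G,σ,T,a}^t(x), Δ_T) > 0}`
is an open subset of `[0,1]^A × [0,1]^V` (with its subspace topology). -/
theorem orbitGap_pos_isOpen (V : Type*) [Fintype V] [DecidableEq V]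
    (A : Finset (V × V)) (σ : {e // e ∈ A} → Bool) (a : ℝ) (ha0 : 0 ≤ a) (ha1 : a < 1) :
    IsOpen {p : ↥(cubeA A ×ˢ cubeV V) | 0 < orbitGap A σ p.val.1 a p.val.2} := by
  rw [Metric.isOpen_iff]
  rintro ⟨⟨T, x⟩, hTx⟩ hp
  simp only [Set.mem_setOf_eq] at hp
  obtain ⟨hT, hx⟩ : T ∈ cubeA A ∧ x ∈ cubeV V := hTx
  by_cases hA : Nonempty {e // e ∈ A}
  · obtain ⟨e0⟩ := hA
    have hne : (discSet A T).Nonempty :=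
      ⟨fun _ => T e0, ⟨fun u _ => hT e0 (Set.mem_univ _), e0, rfl⟩⟩
    have hfin : orbitGap A σ T a x ≠ ⊤ :=
      ne_top_of_le_ne_top (Metric.infEdist_ne_top hne) (iInf_le _ 0)
    set ε := (orbitGap A σ T a x).toReal with hε_def
    have hε : 0 < ε := ENNReal.toReal_pos (ne_of_gt hp) hfin
    have hcube : ∀ t, (regMap A σ T a)^[t] x ∈ cubeV V :=
      iterate_mem_cubeV A σ T ha0 ha1 hx
    have hK1 : ∀ t (e : {e // e ∈ A}), ε ≤ |((regMap A σ T a)^[t] x) e.val.1 - T e| := by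
      intro t e
      set z := (regMap A σ T a)^[t] x with hz
      have hy : Function.update z e.val.1 (T e) ∈ discSet A T := by
        refine ⟨fun u _ => ?_, e, Function.update_self _ _ _⟩
        rcases eq_or_ne u e.val.1 with rfl | h
        · rw [Function.update_self]; exact hT e (Set.mem_univ _)
        · rw [Function.update_of_ne h]; exact hcube t u (Set.mem_univ _)
      have h1 : orbitGap A σ T a x ≤ edist z (Function.update z e.val.1 (T e)) :=
        le_trans (iInf_le _ t) (EMetric.infEdist_le_edist_of_mem hy)
      have h2 : edist z (Function.update z e.val.1 (T e)) ≤ ENNReal.ofReal |z e.val.1 - T e| := by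
        rw [edist_pi_le_iff]
        intro i
        rcases eq_or_ne i e.val.1 with rfl | h
        · rw [Function.update_self, edist_dist, Real.dist_eq]
        · rw [Function.update_of_ne h]; simp
      exact ENNReal.toReal_le_of_le_ofReal (abs_nonneg _) (le_trans h1 h2)
    refine ⟨ε / 4, by positivity, ?_⟩
    rintro ⟨⟨T', x'⟩, hT'x'⟩ hq
    rw [Metric.mem_ball, Subtype.dist_eq, Prod.dist_eq] at hq
    have hdT : ∀ e, |T' e - T e| ≤ ε / 4 := fun e =>
      calc |T' e - T e| = dist (T' e) (T e) := (Real.dist_eq _ _).symm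
        _ ≤ dist T' T := dist_le_pi_dist _ _ e
        _ ≤ ε / 4 := le_of_lt (lt_of_le_of_lt (le_max_left _ _) hq)
    have hdx : ∀ v, |x' v - x v| ≤ ε / 4 := fun v =>
      calc |x' v - x v| = dist (x' v) (x v) := (Real.dist_eq _ _).symm
        _ ≤ dist x' x := dist_le_pi_dist _ _ v
        _ ≤ ε / 4 := le_of_lt (lt_of_le_of_lt (le_max_right _ _) hq)
    have horb := orbit_close A σ ha0 ha1 (by positivity) (by linarith) hK1 hdT hdx
    simp only [Set.mem_setOf_eq]
    have hlow : ENNReal.ofReal (ε / 2) ≤ orbitGap A σ T' a x' := by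
      refine le_iInf fun t => EMetric.le_infEdist.2 fun y hy => ?_
      obtain ⟨hycube, e, hye⟩ := hy
      set z' := (regMap A σ T' a)^[t] x' with hz'
      set z := (regMap A σ T a)^[t] x with hz
      have h4 : |(z' e.val.1 - T' e) - (z e.val.1 - T e)| ≤ ε / 2 := by
        have key : (z' e.val.1 - T' e) - (z e.val.1 - T e)
            = (z' e.val.1 - z e.val.1) - (T' e - T e) := by ring
        calc |(z' e.val.1 - T' e) - (z e.val.1 - T e)|
            = |(z' e.val.1 - z e.val.1) - (T' e - T e)| := by rw [key]
          _ ≤ |z' e.val.1 - z e.val.1| + |T' e - T e| := abs_sub _ _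
          _ ≤ ε / 2 := by linarith [horb t e.val.1, hdT e]
      have h5 : ε / 2 ≤ |z' e.val.1 - T' e| := by
        have h6 := abs_sub_abs_le_abs_sub (z e.val.1 - T e) (z' e.val.1 - T' e)
        rw [abs_sub_comm] at h4
        linarith [hK1 t e]
      calc ENNReal.ofReal (ε / 2) ≤ ENNReal.ofReal |z' e.val.1 - T' e| :=
            ENNReal.ofReal_le_ofReal h5
        _ = edist (z' e.val.1) (T' e) := by rw [edist_dist, Real.dist_eq]
        _ = edist (z' e.val.1) (y e.val.1) := by rw [hye]
        _ ≤ edist z' y := edist_le_pi_edist _ _ _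
    calc (0 : ℝ≥0∞) < ENNReal.ofReal (ε / 2) := by
          rw [ENNReal.ofReal_pos]; linarith
      _ ≤ _ := hlow
  · refine ⟨1, one_pos, fun q _ => ?_⟩
    simp only [Set.mem_setOf_eq]
    have hdisc : discSet A q.val.1 = ∅ :=
      Set.eq_empty_iff_forall_notMem.2 fun y hy => hA ⟨hy.2.choose⟩
    simp [orbitGap, hdisc, EMetric.infEdist, Metric.infEDist_empty]
end

section
/- Let V be a finite vertex set, G=(V,A) a digraph, σ ∈ {−1,1}^A, a ∈ [0,1), and (T,x) ∈ [0,1]^A × [0,1]^V with ε := inf_{t≥0} d_max(F_{G,σ,T,a}^t(x), Δ_T) > 0. Then there exist τ ∈ ℕ with τ ≥ 1 and y ∈ [0,1]^V such that F_{G,σ,T,a}^τ(y) = y, d_max(F_{G,σ,T,a}^t(y), Δ_T) ≥ ε for every t ≥ 0, and lim_{t→∞} d_max(F_{G,σ,T,a}^t(x), F_{G,σ,T,a}^t(y)) = 0. In particular the asymptotic period P(F_{G,σ,T,a}, x) is finite. -/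
open MeasureTheory Filter Topology
open scoped ENNReal

variable {V : Type*} [Fintype V] [DecidableEq V]

set_option linter.unusedSectionVars false

-- auxiliary lemmas
lemma heaviside_nonneg (s : ℝ) : 0 ≤ heaviside s := by
  unfold heaviside; split <;> norm_num

lemma heaviside_le_one (s : ℝ) : heaviside s ≤ 1 := by
  unfold heaviside; split <;> norm_num

lemma mem_cubeV_iff {w : V → ℝ} : w ∈ cubeV V ↔ ∀ v, w v ∈ Set.Icc (0:ℝ) 1 := by
  simp only [cubeV, Set.mem_pi, Set.mem_univ, forall_true_left, Set.mem_Icc]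

lemma card_attach_filter (A : Finset (V × V)) (v : V) :
    (A.attach.filter fun e => e.val.2 = v).card = inDeg A v := by
  rw [inDeg]
  apply Finset.card_bij (fun e _ => e.val)
  · intro e he
    simp only [Finset.mem_filter, Finset.mem_attach, true_and] at he
    simp [Finset.mem_filter, e.2, he]
  · intro e₁ h₁ e₂ h₂ h
    exact Subtype.ext h
  · intro b hb
    simp only [Finset.mem_filter] at hb
    exact ⟨⟨b, hb.1⟩, by simp [Finset.mem_filter, hb.2], rfl⟩

lemma regMap_mem_cube (A : Finset (V × V)) (σ : {e // e ∈ A} → Bool) (T : {e // e ∈ A} → ℝ)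
    {a : ℝ} (ha0 : 0 ≤ a) (ha1 : a ≤ 1) {w : V → ℝ} (hw : w ∈ cubeV V) :
    regMap A σ T a w ∈ cubeV V := by
  rw [mem_cubeV_iff] at hw ⊢
  intro v
  obtain ⟨h0, h1⟩ := hw v
  set S := ∑ e ∈ A.attach.filter (fun e => e.val.2 = v),
      heaviside (signVal (σ e) * (w e.val.1 - T e)) with hS
  have hS0 : 0 ≤ S := Finset.sum_nonneg fun e _ => heaviside_nonneg _
  have hS1 : S ≤ (inDeg A v : ℝ) := by
    calc S ≤ ∑ _e ∈ A.attach.filter (fun e => e.val.2 = v), (1:ℝ) :=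
          Finset.sum_le_sum fun e _ => heaviside_le_one _
    _ = ((A.attach.filter fun e => e.val.2 = v).card : ℝ) := by simp
    _ = (inDeg A v : ℝ) := by rw [card_attach_filter]
  have hkey : 0 ≤ (inDeg A v : ℝ)⁻¹ * S ∧ (inDeg A v : ℝ)⁻¹ * S ≤ 1 := by
    rcases Nat.eq_zero_or_pos (inDeg A v) with h | h
    · rw [h]; norm_num
    · have hd : (0:ℝ) < (inDeg A v : ℝ) := by exact_mod_cast h
      constructor
      · positivity
      · rw [inv_mul_le_iff₀ hd, mul_one]; exact hS1
  constructor
  · have := hkey.1; simp only [regMap]; nlinarith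
  · have := hkey.2; simp only [regMap]; nlinarith

lemma sep_lemma (A : Finset (V × V)) (T : {e // e ∈ A} → ℝ) {w : V → ℝ}
    (hw : w ∈ cubeV V) (hT : T ∈ cubeA A) {ε : ℝ≥0∞}
    (hgap : ε ≤ EMetric.infEdist w (discSet A T)) (e : {e // e ∈ A}) :
    ε ≤ ENNReal.ofReal |w e.val.1 - T e| := by
  set w' := Function.update w e.val.1 (T e) with hw'
  have hmem : w' ∈ discSet A T := by
    refine ⟨?_, e, ?_⟩
    · rw [mem_cubeV_iff]
      intro v
      by_cases h : v = e.val.1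
      · subst h; rw [hw', Function.update_self]; exact hT e (Set.mem_univ _)
      · rw [hw', Function.update_of_ne h]; exact (mem_cubeV_iff.1 hw) v
    · rw [hw', Function.update_self]
  calc ε ≤ EMetric.infEdist w (discSet A T) := hgap
  _ ≤ edist w w' := EMetric.infEdist_le_edist_of_mem hmem
  _ ≤ ENNReal.ofReal |w e.val.1 - T e| := by
      rw [edist_pi_le_iff]
      intro v
      by_cases h : v = e.val.1
      · subst h
        rw [hw', edist_dist, Function.update_self, Real.dist_eq]
      · rw [hw', Function.update_of_ne h, edist_self]
        exact zero_le

lemma heaviside_sync {b : Bool} {c u u' εr : ℝ} (hεr : εr ≤ |u - c|) (hd : |u' - u| < εr) :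
    heaviside (signVal b * (u' - c)) = heaviside (signVal b * (u - c)) := by
  have hεr0 : 0 < εr := lt_of_le_of_lt (abs_nonneg _) hd
  have hd1 := (abs_lt.1 hd).1
  have hd2 := (abs_lt.1 hd).2
  have hsign : (0 < u - c ∧ 0 < u' - c) ∨ (u - c < 0 ∧ u' - c < 0) := by
    rcases le_or_gt c u with h | h
    · left
      have h1 : εr ≤ u - c := by rwa [abs_of_nonneg (by linarith)] at hεr
      constructor <;> linarith
    · right
      have h1 : εr ≤ c - u := by
        rw [abs_sub_comm, abs_of_nonneg (by linarith)] at hεr; exact hεr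
      constructor <;> linarith
  have key : (0 ≤ signVal b * (u' - c)) ↔ (0 ≤ signVal b * (u - c)) := by
    rcases hsign with ⟨h1, h2⟩ | ⟨h1, h2⟩ <;> cases b <;>
      simp only [signVal, if_true, if_false, Bool.false_eq_true] <;>
      constructor <;> intro hh <;> nlinarith
  simp only [heaviside, key]

lemma regMap_contract (A : Finset (V × V)) (σ : {e // e ∈ A} → Bool) (T : {e // e ∈ A} → ℝ)
    {a : ℝ} (ha0 : 0 ≤ a) {εr : ℝ} {w w' : V → ℝ}
    (hsep : ∀ e : {e // e ∈ A}, εr ≤ |w e.val.1 - T e|) (hd : dist w' w < εr) :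
    dist (regMap A σ T a w') (regMap A σ T a w) ≤ a * dist w' w := by
  have hH : ∀ e : {e // e ∈ A},
      heaviside (signVal (σ e) * (w' e.val.1 - T e)) =
      heaviside (signVal (σ e) * (w e.val.1 - T e)) := by
    intro e
    refine heaviside_sync (hsep e) ?_
    calc |w' e.val.1 - w e.val.1| = dist (w' e.val.1) (w e.val.1) := (Real.dist_eq _ _).symm
    _ ≤ dist w' w := dist_le_pi_dist w' w _
    _ < εr := hd
  rw [dist_pi_le_iff (mul_nonneg ha0 dist_nonneg)]
  intro v
  have hdiff : regMap A σ T a w' v - regMap A σ T a w v = a * (w' v - w v) := by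
    simp only [regMap]
    rw [Finset.sum_congr rfl (fun e _ => hH e)]
    ring
  rw [Real.dist_eq, hdiff, abs_mul, abs_of_nonneg ha0]
  exact mul_le_mul_of_nonneg_left (by rw [← Real.dist_eq]; exact dist_le_pi_dist w' w v) ha0

-- helper: from a (not necessarily minimal) period get an asymptotic period
lemma asympPeriod_of_periodic (A : Finset (V × V)) (σ : {e // e ∈ A} → Bool)
    (T : {e // e ∈ A} → ℝ) (a : ℝ) (x : V → ℝ) {y : V → ℝ} {τ : ℕ}
    (hτ : 1 ≤ τ) (hy : y ∈ cubeV V) (hper : (regMap A σ T a)^[τ] y = y)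
    (htend : Filter.Tendsto (fun t => dist ((regMap A σ T a)^[t] x) ((regMap A σ T a)^[t] y))
      Filter.atTop (nhds 0)) : ∃ τ' : ℕ, asympPeriod A σ T a x τ' := by
  classical
  have hP : ∃ n, 0 < n ∧ (regMap A σ T a)^[n] y = y := ⟨τ, hτ, hper⟩
  refine ⟨Nat.find hP, (Nat.find_spec hP).1, y, hy, (Nat.find_spec hP).2, ?_, htend⟩
  intro t ht htτ heq
  exact Nat.find_min hP htτ ⟨ht, heq⟩

/-- If `(T,x) ∈ [0,1]^A × [0,1]^V` satisfies
`ε := inf_{t≥0} d_max(F_{G,σ,T,a}^t(x), Δ_T) > 0`, then there are `τ ≥ 1` and `y ∈ [0,1]^V`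
with `F^τ(y) = y`, `d_max(F^t(y), Δ_T) ≥ ε` for every `t`, and
`d_max(F^t(x), F^t(y)) → 0`; in particular the asymptotic period `P(F_{G,σ,T,a}, x)` is
finite. -/
theorem exists_periodic_attractor_of_orbitGap_pos (V : Type*) [Fintype V] [DecidableEq V]
    (A : Finset (V × V)) (σ : {e // e ∈ A} → Bool) (a : ℝ) (ha0 : 0 ≤ a) (ha1 : a < 1)
    (T : {e // e ∈ A} → ℝ) (hT : T ∈ cubeA A) (x : V → ℝ) (hx : x ∈ cubeV V)
    (ε : ℝ≥0∞) (hε : 0 < ε) (hgap : orbitGap A σ T a x = ε) :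
    (∃ τ : ℕ, 1 ≤ τ ∧ ∃ y ∈ cubeV V, (regMap A σ T a)^[τ] y = y ∧
      (∀ t : ℕ, ε ≤ EMetric.infEdist ((regMap A σ T a)^[t] y) (discSet A T)) ∧
      Filter.Tendsto (fun t => dist ((regMap A σ T a)^[t] x) ((regMap A σ T a)^[t] y))
        Filter.atTop (nhds 0)) ∧
    ∃ τ : ℕ, asympPeriod A σ T a x τ := by
  classical
  set F := regMap A σ T a with hF
  set Δ := discSet A T with hΔdef
  have main : ∃ τ : ℕ, 1 ≤ τ ∧ ∃ y ∈ cubeV V, F^[τ] y = y ∧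
      (∀ t : ℕ, ε ≤ EMetric.infEdist (F^[t] y) Δ) ∧
      Filter.Tendsto (fun t => dist (F^[t] x) (F^[t] y)) Filter.atTop (nhds 0) := by
    have hzsucc : ∀ t, F^[t+1] x = F (F^[t] x) := fun t => Function.iterate_succ_apply' F t x
    have hzcube : ∀ t, F^[t] x ∈ cubeV V := by
      intro t
      induction t with
      | zero => exact hx
      | succ n ih => rw [hzsucc]; exact regMap_mem_cube A σ T ha0 ha1.le ih
    have hzgap : ∀ t, ε ≤ EMetric.infEdist (F^[t] x) Δ := by
      intro t; rw [← hgap]; exact iInf_le _ t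
    by_cases hA : A = ∅
    · -- degenerate case : no arrows, F is multiplication by a, fixed point 0
      subst hA
      have hΔe : Δ = ∅ := by
        ext w
        simp only [hΔdef, discSet, Set.mem_setOf_eq, Set.mem_empty_iff_false, iff_false,
          not_and]
        rintro _ ⟨e, _⟩
        exact absurd e.2 (Finset.notMem_empty _)
      have hcontr : ∀ w w' : V → ℝ, dist (F w') (F w) ≤ a * dist w' w := by
        intro w w'
        refine regMap_contract _ σ T ha0 (εr := dist w' w + 1) ?_ (by linarith [dist_nonneg (x := w') (y := w)])
        intro e; exact absurd e.2 (Finset.notMem_empty _)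
      set y : V → ℝ := fun _ => 0 with hy
      have hycube : y ∈ cubeV V := by rw [mem_cubeV_iff]; intro v; simp [hy]
      have hyfix : F y = y := by
        funext v
        simp [hF, regMap, hy, heaviside, signVal]
      have hyt : ∀ t, F^[t] y = y := by
        intro t
        induction t with
        | zero => rfl
        | succ n ih => rw [Function.iterate_succ_apply', ih, hyfix]
      have hbound : ∀ t, dist (F^[t] x) (F^[t] y) ≤ a ^ t * dist x y := by
        intro t
        induction t with
        | zero => simp
        | succ n ih =>
          calc dist (F^[n+1] x) (F^[n+1] y)
              = dist (F (F^[n] x)) (F (F^[n] y)) := by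
                rw [hzsucc, Function.iterate_succ_apply']
          _ ≤ a * dist (F^[n] x) (F^[n] y) := hcontr _ _
          _ ≤ a * (a ^ n * dist x y) := mul_le_mul_of_nonneg_left ih ha0
          _ = a ^ (n+1) * dist x y := by ring
      refine ⟨1, le_refl 1, y, hycube, by simpa using hyfix, ?_, ?_⟩
      · intro t; rw [hΔe]; simp [EMetric.infEdist]
      · have h0 : Tendsto (fun t : ℕ => a ^ t * dist x y) atTop (𝓝 0) := by
          have := (tendsto_pow_atTop_nhds_zero_of_lt_one ha0 ha1).mul_const (dist x y)
          simpa using this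
        exact squeeze_zero (fun t => dist_nonneg) hbound h0
    · -- main case
      have hAne : A.Nonempty := Finset.nonempty_iff_ne_empty.2 hA
      obtain ⟨e₀v, he₀⟩ := hAne
      set e₀ : {e // e ∈ A} := ⟨e₀v, he₀⟩ with he₀def
      -- ε is finite
      have hεfin : ε ≠ ⊤ := by
        set p : V → ℝ := Function.update (fun _ => (0:ℝ)) e₀.val.1 (T e₀) with hpdef
        have hp : p ∈ Δ := by
          refine ⟨?_, e₀, ?_⟩
          · rw [mem_cubeV_iff]
            intro v
            by_cases h : v = e₀.val.1
            · subst h; rw [hpdef, Function.update_self]; exact hT e₀ (Set.mem_univ _)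
            · rw [hpdef, Function.update_of_ne h]; norm_num
          · rw [hpdef, Function.update_self]
        have hple : edist x p ≤ ENNReal.ofReal 1 := by
          rw [edist_pi_le_iff]
          intro v
          rw [edist_dist]
          refine ENNReal.ofReal_le_ofReal ?_
          have h1 := (mem_cubeV_iff.1 hx) v
          have h2 := (mem_cubeV_iff.1 hp.1) v
          rw [Real.dist_eq]
          rw [Set.mem_Icc] at h1 h2
          rw [abs_le]
          constructor <;> linarith [h1.1, h1.2, h2.1, h2.2]
        have : ε ≤ ENNReal.ofReal 1 := by
          calc ε ≤ EMetric.infEdist (F^[0] x) Δ := hzgap 0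
          _ ≤ edist x p := EMetric.infEdist_le_edist_of_mem hp
          _ ≤ ENNReal.ofReal 1 := hple
        exact ne_top_of_le_ne_top ENNReal.ofReal_ne_top this
      set εr := ε.toReal with hεrdef
      have hεr0 : 0 < εr := ENNReal.toReal_pos hε.ne' hεfin
      have hsep' : ∀ (t : ℕ) (e : {e // e ∈ A}), εr ≤ |F^[t] x e.val.1 - T e| := by
        intro t e
        exact ENNReal.toReal_le_of_le_ofReal (abs_nonneg _)
          (sep_lemma A T (hzcube t) hT (hzgap t) e)
      set δ := εr * (1 - a) / 2 with hδdef
      have hδ0 : 0 < δ := by rw [hδdef]; nlinarith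
      have hδεr : δ < εr := by rw [hδdef]; nlinarith
      -- find two close orbit points via compactness
      have hcpt : IsCompact (cubeV V) := isCompact_univ_pi fun _ => isCompact_Icc
      obtain ⟨p, -, φ, hφ, hconv⟩ := hcpt.tendsto_subseq hzcube
      obtain ⟨N, hN⟩ := Metric.tendsto_atTop.1 hconv (δ/2) (by positivity)
      set s := φ N with hsdef
      have hst : φ N < φ (N+1) := hφ (Nat.lt_succ_self N)
      obtain ⟨τ, hτ1, hsτ⟩ : ∃ τ, 1 ≤ τ ∧ s + τ = φ (N+1) :=
        ⟨φ (N+1) - φ N, by omega, by omega⟩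
      set d0 := dist (F^[s+τ] x) (F^[s] x) with hd0def
      have hd00 : 0 ≤ d0 := dist_nonneg
      have hd0 : d0 < δ := by
        rw [hd0def, hsτ]
        calc dist (F^[φ (N+1)] x) (F^[φ N] x)
            ≤ dist (F^[φ (N+1)] x) p + dist p (F^[φ N] x) := dist_triangle _ _ _
        _ < δ/2 + δ/2 := by
            refine add_lt_add (hN (N+1) (Nat.le_succ N)) ?_
            rw [dist_comm]; exact hN N le_rfl
        _ = δ := by ring
      have key : ∀ n, dist (F^[s+τ+n] x) (F^[s+n] x) ≤ a^n * d0 := by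
        intro n
        induction n with
        | zero => simp [hd0def]
        | succ n ih =>
          have hle : a^n * d0 ≤ d0 := mul_le_of_le_one_left hd00 (pow_le_one₀ ha0 ha1.le)
          have hlt : dist (F^[s+τ+n] x) (F^[s+n] x) < εr :=
            lt_of_le_of_lt (le_trans ih hle) (lt_trans hd0 hδεr)
          calc dist (F^[s+τ+(n+1)] x) (F^[s+(n+1)] x)
              = dist (F (F^[s+τ+n] x)) (F (F^[s+n] x)) := by
                rw [show s+τ+(n+1) = (s+τ+n)+1 by ring, show s+(n+1) = (s+n)+1 by ring,
                  hzsucc, hzsucc]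
          _ ≤ a * dist (F^[s+τ+n] x) (F^[s+n] x) := regMap_contract A σ T ha0 (hsep' (s+n)) hlt
          _ ≤ a * (a^n * d0) := mul_le_mul_of_nonneg_left ih ha0
          _ = a^(n+1) * d0 := by ring
      set r := a^τ with hrdef
      have hr0 : 0 ≤ r := pow_nonneg ha0 _
      have hr1 : r < 1 := pow_lt_one₀ ha0 ha1 (by omega)
      have hra : r ≤ a := by
        calc a^τ ≤ a^1 := pow_le_pow_of_le_one ha0 ha1.le hτ1
        _ = a := pow_one a
      set u : ℕ → V → ℝ := fun k => F^[s + k*τ] x with hudef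
      have hstep : ∀ k, dist (u k) (u (k+1)) ≤ d0 * r^k := by
        intro k
        rw [dist_comm]
        calc dist (u (k+1)) (u k)
            = dist (F^[s+τ+(k*τ)] x) (F^[s+(k*τ)] x) := by
              rw [hudef]
              congr 2
              ring
        _ ≤ a^(k*τ) * d0 := key _
        _ = d0 * r^k := by rw [hrdef, ← pow_mul, mul_comm τ k]; ring
      obtain ⟨y, hy⟩ := cauchySeq_tendsto_of_complete
        (cauchySeq_of_le_geometric r d0 hr1 hstep)
      have hylim : ∀ k, dist (u k) y ≤ d0 * r^k / (1-r) :=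
        fun k => dist_le_of_le_geometric_of_tendsto r d0 hr1 hstep hy k
      set D := d0 / (1-r) with hDdef
      have hD0 : 0 ≤ D := div_nonneg hd00 (by linarith)
      have hDεr : D < εr := by
        rw [hDdef, div_lt_iff₀ (by linarith : (0:ℝ) < 1-r)]
        nlinarith
      have hyD : ∀ k, dist y (u k) ≤ r^k * D := by
        intro k
        rw [dist_comm]
        calc dist (u k) y ≤ d0 * r^k / (1-r) := hylim k
        _ = r^k * D := by rw [hDdef]; ring
      have track : ∀ (n : ℕ) (w : V → ℝ), dist w (F^[n] x) ≤ D →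
          ∀ m, dist (F^[m] w) (F^[n+m] x) ≤ a^m * dist w (F^[n] x) := by
        intro n w hw m
        induction m with
        | zero => simp
        | succ m ih =>
          have hlt : dist (F^[m] w) (F^[n+m] x) < εr :=
            lt_of_le_of_lt (le_trans ih (le_trans
              (mul_le_of_le_one_left dist_nonneg (pow_le_one₀ ha0 ha1.le)) hw)) hDεr
          calc dist (F^[m+1] w) (F^[n+(m+1)] x)
              = dist (F (F^[m] w)) (F (F^[n+m] x)) := by
                rw [Function.iterate_succ_apply', show n+(m+1) = (n+m)+1 by ring, hzsucc]
          _ ≤ a * dist (F^[m] w) (F^[n+m] x) := regMap_contract A σ T ha0 (hsep' (n+m)) hlt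
          _ ≤ a * (a^m * dist w (F^[n] x)) := mul_le_mul_of_nonneg_left ih ha0
          _ = a^(m+1) * dist w (F^[n] x) := by ring
      have hmain : ∀ k m, dist (F^[m] y) (F^[s+k*τ+m] x) ≤ a^m * (r^k * D) := by
        intro k m
        have h1 : dist y (F^[s+k*τ] x) ≤ r^k * D := hyD k
        have h2 : dist y (F^[s+k*τ] x) ≤ D :=
          le_trans h1 (mul_le_of_le_one_left hD0 (pow_le_one₀ hr0 hr1.le))
        exact le_trans (track (s+k*τ) y h2 m)
          (mul_le_mul_of_nonneg_left h1 (pow_nonneg ha0 m))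
      have hrt : Tendsto (fun k : ℕ => r^k) atTop (𝓝 0) :=
        tendsto_pow_atTop_nhds_zero_of_lt_one hr0 hr1
      have hper : F^[τ] y = y := by
        have hb : ∀ k, dist (F^[τ] y) y ≤ (a^τ*D + r*D) * r^k := by
          intro k
          calc dist (F^[τ] y) y
              ≤ dist (F^[τ] y) (F^[s+k*τ+τ] x) + dist (F^[s+k*τ+τ] x) y := dist_triangle _ _ _
          _ ≤ a^τ * (r^k*D) + r^(k+1)*D := by
              refine add_le_add (hmain k τ) ?_
              rw [dist_comm]
              have h3 := hyD (k+1)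
              rw [hudef] at h3
              simpa [show s+(k+1)*τ = s+k*τ+τ by ring] using h3
          _ = (a^τ*D + r*D) * r^k := by ring
        have h0 : Tendsto (fun k : ℕ => (a^τ*D + r*D) * r^k) atTop (𝓝 0) := by
          simpa using hrt.const_mul (a^τ*D + r*D)
        exact dist_le_zero.1 (ge_of_tendsto' h0 hb)
      have hycube : y ∈ cubeV V := by
        have hcl : IsClosed (cubeV V) := isClosed_set_pi fun i _ => isClosed_Icc
        exact hcl.mem_of_tendsto hy (Filter.Eventually.of_forall fun k => hzcube _)
      have hygapm : ∀ m, ε ≤ EMetric.infEdist (F^[m] y) Δ := by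
        intro m
        refine ENNReal.le_of_forall_pos_le_add ?_
        intro η hη _
        have h0 : Tendsto (fun k : ℕ => a^m*(r^k*D)) atTop (𝓝 0) := by
          have := (hrt.mul_const D).const_mul (a^m)
          simpa using this
        obtain ⟨k, hk⟩ := (h0.eventually (gt_mem_nhds (by exact_mod_cast hη : (0:ℝ) < η))).exists
        calc ε ≤ EMetric.infEdist (F^[s+k*τ+m] x) Δ := hzgap _
        _ ≤ EMetric.infEdist (F^[m] y) Δ + edist (F^[s+k*τ+m] x) (F^[m] y) :=
            EMetric.infEdist_le_infEdist_add_edist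
        _ ≤ EMetric.infEdist (F^[m] y) Δ + η := by
            refine add_le_add le_rfl ?_
            rw [edist_dist]
            calc ENNReal.ofReal (dist (F^[s+k*τ+m] x) (F^[m] y))
                ≤ ENNReal.ofReal (η:ℝ) := ENNReal.ofReal_le_ofReal
                  (by rw [dist_comm]; exact le_of_lt (lt_of_le_of_lt (hmain k m) hk))
            _ = (η : ℝ≥0∞) := ENNReal.ofReal_coe_nnreal
      have hyperk : ∀ k, F^[k*τ] y = y := by
        intro k
        induction k with
        | zero => rw [Nat.zero_mul, Function.iterate_zero_apply]
        | succ k ih =>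
          rw [show (k+1)*τ = τ + k*τ by ring, Function.iterate_add_apply, ih, hper]
      have hitcube : ∀ (m : ℕ) (w : V → ℝ), w ∈ cubeV V → F^[m] w ∈ cubeV V := by
        intro m
        induction m with
        | zero => intro w hw; exact hw
        | succ m ih =>
          intro w hw
          rw [Function.iterate_succ_apply']
          exact regMap_mem_cube A σ T ha0 ha1.le (ih w hw)
      have hy'per : F^[τ] (F^[s*(τ-1)] y) = F^[s*(τ-1)] y := by
        rw [← Function.iterate_add_apply, show τ + s*(τ-1) = s*(τ-1) + τ by ring,
          Function.iterate_add_apply, hper]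
      have hy'gap : ∀ t : ℕ, ε ≤ EMetric.infEdist (F^[t] (F^[s*(τ-1)] y)) Δ := by
        intro t
        rw [← Function.iterate_add_apply]
        exact hygapm _
      have hbound2 : ∀ t, s ≤ t → dist (F^[t] x) (F^[t] (F^[s*(τ-1)] y)) ≤ a^(t-s) * D := by
        intro t hts
        have harith : t + s*(τ-1) = (t-s) + s*τ := by
          obtain ⟨τ'', hττ⟩ : ∃ τ'', τ = τ''+1 := ⟨τ-1, by omega⟩
          rw [hττ]
          have h3 : τ''+1-1 = τ'' := rfl
          rw [h3, show s*(τ''+1) = s*τ''+s by ring]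
          generalize s*τ'' = M
          omega
        have hyt2 : F^[t] (F^[s*(τ-1)] y) = F^[t-s] y := by
          rw [← Function.iterate_add_apply, harith, Function.iterate_add_apply, hyperk s]
        rw [hyt2, dist_comm]
        have h2 : dist y (F^[s] x) ≤ D := by
          have h3 := hyD 0
          rw [hudef] at h3
          simpa using h3
        have h3 := track s y h2 (t-s)
        rw [show s + (t-s) = t by omega] at h3
        exact le_trans h3 (mul_le_mul_of_nonneg_left h2 (pow_nonneg ha0 _))
      have hgoal : Tendsto (fun t => dist (F^[t] x) (F^[t] (F^[s*(τ-1)] y))) atTop (𝓝 0) := by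
        have hg : Tendsto (fun t : ℕ => a^(t-s)*D) atTop (𝓝 0) := by
          have h1 : Tendsto (fun n : ℕ => a^n * D) atTop (𝓝 0) := by
            simpa using (tendsto_pow_atTop_nhds_zero_of_lt_one ha0 ha1).mul_const D
          exact h1.comp (tendsto_sub_atTop_nat s)
        refine squeeze_zero' (Filter.Eventually.of_forall fun t => dist_nonneg) ?_ hg
        filter_upwards [eventually_ge_atTop s] with t ht
        exact hbound2 t ht
      exact ⟨τ, hτ1, F^[s*(τ-1)] y, hitcube _ _ hycube, hy'per, hy'gap, hgoal⟩
  refine ⟨main, ?_⟩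
  obtain ⟨τ, hτ, y, hy, hper, _, htend⟩ := main
  exact asympPeriod_of_periodic A σ T a x hτ hy hper htend
end
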